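/- Let B = ⟨a, b ∣ a b a⁻¹ b = 1⟩ be the Klein bottle group. Then every automorphism φ of B satisfies φ(a²) = a² or φ(a²) = a⁻². -/

import Mathlib

/-- The single relator `a * b * a⁻¹ * b` of the Klein bottle group,
where `a = FreeGroup.of 0` and `b = FreeGroup.of 1`. -/
def kleinBottleRels : Set (FreeGroup (Fin 2)) :=
  {FreeGroup.of 0 * FreeGroup.of 1 * (FreeGroup.of 0)⁻¹ * FreeGroup.of 1}

/-- The Klein bottle group `B = ⟨a, b ∣ a b a⁻¹ b = 1⟩`. -/
abbrev KleinBottleGroup : Type := PresentedGroup kleinBottleRels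

/-- The generator `a` of the Klein bottle group. -/
def kleinA : KleinBottleGroup := PresentedGroup.of 0

/-- The generator `b` of the Klein bottle group. -/
def kleinB : KleinBottleGroup := PresentedGroup.of 1

open Multiplicative SemidirectProduct

/-- Action of `Multiplicative ℤ` on `Multiplicative ℤ`: the generator acts by inversion. -/
def kleinPsi : Multiplicative ℤ →* MulAut (Multiplicative ℤ) :=
  zpowersHom _ (MulEquiv.inv (Multiplicative ℤ))

lemma kleinInv_sq :
    (MulEquiv.inv (Multiplicative ℤ)) * (MulEquiv.inv (Multiplicative ℤ)) = 1 := by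
  ext x
  simp

lemma kleinPsi_eq (g : Multiplicative ℤ) :
    kleinPsi g = if Even g.toAdd then 1 else MulEquiv.inv (Multiplicative ℤ) := by
  have key : ∀ k : ℤ, (MulEquiv.inv (Multiplicative ℤ)) ^ (k + k) = 1 := by
    intro k
    rw [zpow_add, ← Commute.mul_zpow (Commute.refl _), kleinInv_sq, one_zpow]
  rcases Int.even_or_odd g.toAdd with ⟨k, hk⟩ | ⟨k, hk⟩
  · rw [if_pos ⟨k, hk⟩]
    show (MulEquiv.inv (Multiplicative ℤ)) ^ g.toAdd = 1
    rw [hk]; exact key k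
  · rw [if_neg (by rw [Int.not_even_iff_odd]; exact ⟨k, hk⟩)]
    show (MulEquiv.inv (Multiplicative ℤ)) ^ g.toAdd = _
    rw [hk, show 2 * k + 1 = (k + k) + 1 by ring, zpow_add, key, one_mul, zpow_one]

/-- The concrete model of the Klein bottle group. -/
abbrev KleinModel : Type := Multiplicative ℤ ⋊[kleinPsi] Multiplicative ℤ

lemma kleinPsi_one_apply (x : Multiplicative ℤ) : kleinPsi (ofAdd 1) x = x⁻¹ := by
  rw [kleinPsi_eq]
  simp

/-- The defining map on generators. -/
def kleinFmap : Fin 2 → KleinModel := ![inr (ofAdd 1), inl (ofAdd 1)]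

lemma kleinRelCheck : ∀ r ∈ kleinBottleRels, FreeGroup.lift kleinFmap r = 1 := by
  intro r hr
  rw [kleinBottleRels, Set.mem_singleton_iff] at hr
  subst hr
  simp only [map_mul, map_inv, FreeGroup.lift_apply_of, kleinFmap,
    Matrix.cons_val_zero, Matrix.cons_val_one, Matrix.head_cons]
  rw [← map_inv, ← SemidirectProduct.inl_aut, kleinPsi_one_apply, ← map_mul,
    inv_mul_cancel, map_one]

/-- The homomorphism from the Klein bottle group to its concrete model. -/
def kleinF : KleinBottleGroup →* KleinModel := PresentedGroup.toGroup kleinRelCheck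

lemma klein_rel : kleinA * kleinB * kleinA⁻¹ * kleinB = 1 := by
  have h : kleinA * kleinB * kleinA⁻¹ * kleinB =
      PresentedGroup.mk kleinBottleRels
        (FreeGroup.of 0 * FreeGroup.of 1 * (FreeGroup.of 0)⁻¹ * FreeGroup.of 1) := by
    simp [kleinA, kleinB, PresentedGroup.of, map_mul, map_inv]
  rw [h]
  exact (QuotientGroup.eq_one_iff _).2
    (Subgroup.subset_normalClosure (by simp [kleinBottleRels]))

lemma klein_rel2 : kleinA * kleinB * kleinA⁻¹ = kleinB⁻¹ := by
  have h := klein_rel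
  have := mul_eq_one_iff_eq_inv.mp h
  exact this

lemma klein_comm2 : Commute (kleinA ^ (2 : ℤ)) kleinB := by
  have h1 : kleinA * kleinB = kleinB⁻¹ * kleinA := by
    calc kleinA * kleinB = (kleinA * kleinB * kleinA⁻¹) * kleinA := by group
    _ = kleinB⁻¹ * kleinA := by rw [klein_rel2]
  have h2 : kleinA * kleinB⁻¹ = kleinB * kleinA := by
    calc kleinA * kleinB⁻¹ = (kleinA * kleinB * kleinA⁻¹)⁻¹ * kleinA := by group
    _ = kleinB * kleinA := by rw [klein_rel2]; group
  show kleinA ^ (2:ℤ) * kleinB = kleinB * kleinA ^ (2:ℤ)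
  have h3 : kleinA ^ (2:ℤ) = kleinA * kleinA := by
    rw [show (2:ℤ) = 1 + 1 by norm_num, zpow_add, zpow_one]
  rw [h3, mul_assoc, h1, ← mul_assoc, h2, mul_assoc]

lemma klein_conj_pow (n : ℤ) :
    kleinA ^ n * kleinB * (kleinA ^ n)⁻¹ = if Even n then kleinB else kleinB⁻¹ := by
  have key : ∀ k : ℤ, Commute (kleinA ^ (k + k)) kleinB := by
    intro k
    have h : kleinA ^ (k + k) = (kleinA ^ (2:ℤ)) ^ k := by
      rw [← zpow_mul]; ring_nf
    rw [h]
    exact klein_comm2.zpow_left k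
  rcases Int.even_or_odd n with ⟨k, hk⟩ | ⟨k, hk⟩
  · rw [if_pos ⟨k, hk⟩, hk]
    rw [(key k).eq, mul_assoc, mul_inv_cancel, mul_one]
  · rw [if_neg (by rw [Int.not_even_iff_odd]; exact ⟨k, hk⟩), hk]
    have hsplit : kleinA ^ (2 * k + 1) = kleinA ^ (k + k) * kleinA := by
      rw [show 2 * k + 1 = (k + k) + 1 by ring, zpow_add, zpow_one]
    rw [hsplit]
    calc kleinA ^ (k + k) * kleinA * kleinB * (kleinA ^ (k + k) * kleinA)⁻¹
        = kleinA ^ (k + k) * (kleinA * kleinB * kleinA⁻¹) * (kleinA ^ (k + k))⁻¹ := by group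
    _ = kleinA ^ (k + k) * kleinB⁻¹ * (kleinA ^ (k + k))⁻¹ := by rw [klein_rel2]
    _ = kleinB⁻¹ := by
        rw [((key k).inv_right).eq, mul_assoc, mul_inv_cancel, mul_one]

lemma kleinCompat : ∀ g : Multiplicative ℤ,
    (zpowersHom KleinBottleGroup kleinB).comp (kleinPsi g).toMonoidHom =
      (MulAut.conj ((zpowersHom KleinBottleGroup kleinA) g)).toMonoidHom.comp
        (zpowersHom KleinBottleGroup kleinB) := by
  intro g
  apply MonoidHom.ext_mint
  simp only [MonoidHom.comp_apply, MulEquiv.coe_toMonoidHom, MulAut.conj_apply,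
    zpowersHom_apply, kleinPsi_eq]
  rcases Int.even_or_odd g.toAdd with he | ho
  · rw [if_pos he]
    have h := klein_conj_pow g.toAdd
    rw [if_pos he] at h
    simpa using h.symm
  · rw [if_neg (Int.not_even_iff_odd.2 ho)]
    have h := klein_conj_pow g.toAdd
    rw [if_neg (Int.not_even_iff_odd.2 ho)] at h
    simpa using h.symm

/-- The homomorphism from the concrete model back to the Klein bottle group. -/
def kleinG : KleinModel →* KleinBottleGroup :=
  SemidirectProduct.lift (zpowersHom _ kleinB) (zpowersHom _ kleinA) kleinCompat

lemma kleinF_a : kleinF kleinA = inr (ofAdd 1) := by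
  show kleinF (PresentedGroup.of 0) = _
  rw [kleinF, PresentedGroup.toGroup.of]
  simp [kleinFmap]

lemma kleinF_b : kleinF kleinB = inl (ofAdd 1) := by
  show kleinF (PresentedGroup.of 1) = _
  rw [kleinF, PresentedGroup.toGroup.of]
  simp [kleinFmap]

lemma kleinGF : kleinG.comp kleinF = MonoidHom.id _ := by
  apply PresentedGroup.ext
  intro x
  fin_cases x
  · show kleinG (kleinF kleinA) = kleinA
    rw [kleinF_a]
    simp [kleinG]
  · show kleinG (kleinF kleinB) = kleinB
    rw [kleinF_b]
    simp [kleinG]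

lemma kleinF_inj : Function.Injective kleinF := by
  intro x y h
  have hx := DFunLike.congr_fun kleinGF x
  have hy := DFunLike.congr_fun kleinGF y
  simp only [MonoidHom.comp_apply, MonoidHom.id_apply] at hx hy
  rw [← hx, ← hy, h]

lemma kleinA_sq_central (x : KleinBottleGroup) :
    kleinA ^ (2:ℤ) * x = x * kleinA ^ (2:ℤ) := by
  have hx : x ∈ Subgroup.centralizer {kleinA ^ (2:ℤ)} := by
    apply PresentedGroup.generated_by
    intro j
    rw [Subgroup.mem_centralizer_iff]
    intro h hmem
    rw [Set.mem_singleton_iff] at hmem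
    subst hmem
    fin_cases j
    · show kleinA ^ (2:ℤ) * kleinA = kleinA * kleinA ^ (2:ℤ)
      exact ((Commute.refl kleinA).zpow_left 2).eq
    · show kleinA ^ (2:ℤ) * kleinB = kleinB * kleinA ^ (2:ℤ)
      exact klein_comm2.eq
  exact Subgroup.mem_centralizer_iff.1 hx _ (Set.mem_singleton _)

lemma kleinF_a_zpow (n : ℤ) : kleinF (kleinA ^ n) = inr (ofAdd n) := by
  rw [map_zpow, kleinF_a, ← map_zpow]
  congr 1
  rw [← ofAdd_zsmul]
  norm_num

/-- Every central element has an image `inr (ofAdd (2k))`. -/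
lemma klein_central_eq (z : KleinBottleGroup)
    (hz : ∀ x : KleinBottleGroup, z * x = x * z) : ∃ k : ℤ, z = kleinA ^ (2 * k) := by
  set w := kleinF z with hw
  -- commuting with a gives w.left = 1
  have h1 : w * inr (ofAdd 1) = inr (ofAdd 1) * w := by
    rw [hw, ← kleinF_a, ← map_mul, ← map_mul, hz]
  have hleft : w.left = 1 := by
    have h1l := congrArg SemidirectProduct.left h1
    simp only [mul_left, left_inr, right_inr, map_one, mul_one, one_mul] at h1l
    rw [kleinPsi_one_apply] at h1l
    have h0 : w.left.toAdd = 0 := by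
      have := congrArg Multiplicative.toAdd h1l
      simp only [toAdd_inv] at this
      omega
    rw [← ofAdd_toAdd w.left, h0, ofAdd_zero]
  -- commuting with b gives w.right even
  have hcb : w * inl (ofAdd 1) = inl (ofAdd 1) * w := by
    rw [hw, ← kleinF_b, ← map_mul, ← map_mul, hz]
  have hright : Even w.right.toAdd := by
    by_contra ho
    have h2l := congrArg SemidirectProduct.left hcb
    simp only [mul_left, left_inl, right_inl, map_one, MulAut.one_apply] at h2l
    rw [kleinPsi_eq, if_neg ho, hleft, one_mul, mul_one] at h2l
    have := congrArg Multiplicative.toAdd h2l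
    simp at this
  obtain ⟨k, hk⟩ := hright
  refine ⟨k, kleinF_inj ?_⟩
  rw [kleinF_a_zpow, ← hw]
  rw [← inl_left_mul_inr_right w, hleft, map_one, one_mul]
  congr 1
  rw [← ofAdd_toAdd w.right, hk]
  congr 1
  ring

/-- Every automorphism of the Klein bottle group sends `a ^ 2` to `a ^ 2` or `a ^ (-2)`. -/
theorem kleinBottle_aut_a_sq (φ : KleinBottleGroup ≃* KleinBottleGroup) :
    φ (kleinA ^ 2) = kleinA ^ 2 ∨ φ (kleinA ^ 2) = (kleinA ^ 2)⁻¹ := by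
  have hsq : kleinA ^ (2:ℕ) = kleinA ^ (2:ℤ) := by
    rw [← zpow_natCast]
    norm_num
  have central_im : ∀ ψ : KleinBottleGroup ≃* KleinBottleGroup,
      ∃ k : ℤ, ψ (kleinA ^ (2:ℤ)) = kleinA ^ (2 * k) := by
    intro ψ
    apply klein_central_eq
    intro x
    calc ψ (kleinA ^ (2:ℤ)) * x = ψ (kleinA ^ (2:ℤ) * ψ.symm x) := by
          rw [map_mul, MulEquiv.apply_symm_apply]
    _ = ψ (ψ.symm x * kleinA ^ (2:ℤ)) := by rw [kleinA_sq_central]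
    _ = x * ψ (kleinA ^ (2:ℤ)) := by rw [map_mul, MulEquiv.apply_symm_apply]
  obtain ⟨k, hk⟩ := central_im φ
  obtain ⟨j, hj⟩ := central_im φ.symm
  have key : kleinA ^ (2:ℤ) = kleinA ^ (2 * (j * k)) := by
    calc kleinA ^ (2:ℤ) = φ (φ.symm (kleinA ^ (2:ℤ))) := (φ.apply_symm_apply _).symm
    _ = φ ((kleinA ^ (2:ℤ)) ^ j) := by rw [hj, ← zpow_mul, mul_comm]
    _ = (φ (kleinA ^ (2:ℤ))) ^ j := map_zpow φ _ j
    _ = kleinA ^ (2 * (j * k)) := by rw [hk, ← zpow_mul]; ring_nf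
  have hinj : (2:ℤ) = 2 * (j * k) := by
    have h := congrArg kleinF key
    rw [kleinF_a_zpow, kleinF_a_zpow] at h
    have h2 := inr_injective h
    exact ofAdd.injective h2
  have hjk : j * k = 1 := by omega
  have hku : k = 1 ∨ k = -1 := by
    have hk1 : IsUnit k := IsUnit.of_mul_eq_one (a := k) j (by rw [mul_comm]; exact hjk)
    exact Int.isUnit_iff.mp hk1
  rcases hku with h | h
  · left
    rw [hsq, hk, h]
    norm_num
  · right
    rw [hsq, hk, h]
    rw [← zpow_neg]
    norm_num
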